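/- Euler's constant γ satisfies Vacca's series: γ = Σ_{n=1}^∞ (-1)^n ⌊log₂ n⌋ / n, where the series converges. -/

import Mathlib

open Real Filter Finset

noncomputable def Hh (n : ℕ) : ℝ := (_root_.harmonic n : ℝ)
noncomputable def LL (N : ℕ) : ℝ := ∑ n ∈ Finset.Icc 1 N, (-1 : ℝ) ^ n / n
noncomputable def SS (N : ℕ) : ℝ := ∑ n ∈ Finset.Icc 1 N, (-1 : ℝ) ^ n * (Nat.log 2 n : ℝ) / n

lemma sum_Ioc_split (f : ℕ → ℝ) {K N : ℕ} (h : K ≤ N) :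
    ∑ n ∈ Finset.Icc 1 N, f n = (∑ n ∈ Finset.Icc 1 K, f n) + ∑ n ∈ Finset.Ioc K N, f n := by
  have h0 : Finset.Icc 1 N = Finset.Ioc 0 N := by rw [← Finset.Icc_add_one_left_eq_Ioc]; rfl
  have h1 : Finset.Icc 1 K = Finset.Ioc 0 K := by rw [← Finset.Icc_add_one_left_eq_Ioc]; rfl
  rw [h0, h1, ← Finset.sum_Ioc_consecutive f (Nat.zero_le K) h]

lemma LL_diff {K N : ℕ} (h : K ≤ N) :
    ∑ n ∈ Finset.Ioc K N, (-1:ℝ)^n / n = LL N - LL K := by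
  rw [LL, LL, sum_Ioc_split _ h]; ring

lemma Hh_succ (n : ℕ) : Hh (n+1) = Hh n + 1/((n:ℝ)+1) := by
  simp only [Hh, harmonic_succ]; push_cast; ring

lemma LL_succ (n : ℕ) : LL (n+1) = LL n + (-1:ℝ)^(n+1) / (n+1) := by
  rw [LL, Finset.sum_Icc_succ_top (by omega), ← LL]; norm_num

lemma LL_even (m : ℕ) : LL (2*m) = Hh m - Hh (2*m) := by
  induction m with
  | zero => simp [LL, Hh, harmonic_zero]
  | succ m ih =>
    have h1 : 2*(m+1) = (2*m+1)+1 := by ring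
    rw [h1, LL_succ, LL_succ, ih]
    have e1 : (-1:ℝ)^(2*m+1) = -1 := by rw [pow_succ, pow_mul]; norm_num
    have e2 : (-1:ℝ)^(2*m+1+1) = 1 := by rw [pow_succ, e1]; norm_num
    rw [e1, e2, show (2*m+1+1:ℕ) = (2*m+1)+1 from rfl, Hh_succ (2*m+1),
      show (2*m+1:ℕ) = (2*m)+1 from rfl, Hh_succ (2*m), Hh_succ m]
    push_cast
    field_simp
    ring

lemma LL_odd (m : ℕ) : LL (2*m+1) = Hh (m+1) - Hh (2*m+2) - 1/(2*(m:ℝ)+2) := by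
  have h := LL_succ (2*m+1)
  have e2 : (-1:ℝ)^(2*m+1+1) = 1 := by
    have : (2*m+1+1) = 2*(m+1) := by ring
    rw [this, pow_mul]; norm_num
  rw [e2, show (2*m+1+1 : ℕ) = 2*(m+1) from by ring, LL_even (m+1)] at h
  have hc : ((2*(m+1):ℕ):ℝ) = ((2*m+1:ℕ):ℝ) + 1 := by push_cast; ring
  have : LL (2*m+1) = Hh (m+1) - Hh (2*(m+1)) - 1/((2*(m+1):ℕ):ℝ) := by
    rw [hc]; linarith
  rw [this]; push_cast; ring_nf

lemma LL_pow (j : ℕ) : LL (2^(j+1) - 1) = Hh (2^j) - Hh (2^(j+1)) - 1/(2:ℝ)^(j+1) := by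
  have h1 : 2^(j+1) - 1 = 2*(2^j - 1) + 1 := by
    have : 1 ≤ 2^j := Nat.one_le_two_pow
    omega
  have h2 : 2^j - 1 + 1 = 2^j := by have : 1 ≤ 2^j := Nat.one_le_two_pow; omega
  have h3 : 2*(2^j - 1) + 2 = 2^(j+1) := by
    have : 1 ≤ 2^j := Nat.one_le_two_pow; rw [pow_succ]; omega
  rw [h1, LL_odd, h2, h3]
  congr 1
  have : ((2^j - 1 : ℕ) : ℝ) = 2^j - 1 := by
    push_cast [Nat.one_le_two_pow]; ring
  rw [this]
  push_cast
  ring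

lemma SS_pow (M : ℕ) : SS (2^(M+1) - 1)
    = ((M:ℝ)+1) * Hh (2^M) - M * Hh (2^(M+1)) - ((M:ℝ)+2)/2^(M+1) := by
  induction M with
  | zero =>
    have : SS 1 = 0 := by simp [SS]
    rw [show 2^(0+1) - 1 = 1 from rfl, this, Hh, Hh]
    norm_num [harmonic_succ, harmonic_zero]
  | succ M ih =>
    have hK : (2^(M+1) - 1 : ℕ) ≤ 2^(M+2) - 1 := by
      have : (2:ℕ)^(M+1) ≤ 2^(M+2) := Nat.pow_le_pow_right (by norm_num) (by omega)
      omega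
    have hsplit := sum_Ioc_split (fun n => (-1 : ℝ) ^ n * (Nat.log 2 n : ℝ) / n) hK
    have hblock : ∑ n ∈ Finset.Ioc (2^(M+1) - 1) (2^(M+2) - 1),
        (-1 : ℝ) ^ n * (Nat.log 2 n : ℝ) / n
        = ((M:ℝ)+1) * (LL (2^(M+2)-1) - LL (2^(M+1)-1)) := by
      rw [← LL_diff hK, Finset.mul_sum, Finset.sum_congr rfl]
      intro n hn
      simp only [Finset.mem_Ioc] at hn
      have h1 : 2^(M+1) ≤ n := by have : 1 ≤ (2:ℕ)^(M+1) := Nat.one_le_two_pow; omega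
      have h2 : n < 2^(M+2) := by have : 1 ≤ (2:ℕ)^(M+2) := Nat.one_le_two_pow; omega
      rw [Nat.log_eq_of_pow_le_of_lt_pow h1 h2]
      push_cast; ring
    have : SS (2^(M+2) - 1)
        = SS (2^(M+1) - 1) + ((M:ℝ)+1) * (LL (2^(M+2)-1) - LL (2^(M+1)-1)) := by
      rw [SS, hsplit, ← SS, hblock]
    rw [show M+1+1 = M+2 from rfl, this, ih, LL_pow (M+1), LL_pow M]
    push_cast
    ring

lemma Hh_gamma_bound {n : ℕ} (hn : 1 ≤ n) :
    |Hh n - Real.log n - Real.eulerMascheroniConstant| ≤ 1/(n:ℝ) := by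
  have hn0 : (0:ℝ) < n := by exact_mod_cast hn
  have hub := Real.eulerMascheroniConstant_lt_eulerMascheroniSeq' n
  rw [Real.eulerMascheroniSeq', if_neg (by omega)] at hub
  have hlb := Real.eulerMascheroniSeq_lt_eulerMascheroniConstant n
  rw [Real.eulerMascheroniSeq] at hlb
  have hlog : Real.log (n+1) - Real.log n ≤ 1/(n:ℝ) := by
    rw [← Real.log_div (by positivity) (by positivity)]
    have := Real.log_le_sub_one_of_pos (show (0:ℝ) < ((n:ℝ)+1)/n by positivity)
    have h2 : ((n:ℝ)+1)/n - 1 = 1/n := by field_simp; ring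
    linarith
  rw [abs_le]
  have h1n : (0:ℝ) ≤ 1/(n:ℝ) := by positivity
  constructor
  · simp only [Hh]; linarith
  · simp only [Hh]; linarith

lemma Hh_pow_bound (k : ℕ) :
    |Hh (2^k) - k * Real.log 2 - Real.eulerMascheroniConstant| ≤ (1/2:ℝ)^k := by
  have h := Hh_gamma_bound (n := 2^k) Nat.one_le_two_pow
  have hc : ((2^k : ℕ) : ℝ) = (2:ℝ)^k := by push_cast; ring
  rw [hc, Real.log_pow] at h
  have : (1/((2:ℝ)^k)) = (1/2:ℝ)^k := by rw [div_pow]; norm_num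
  rw [← this]
  exact h

lemma tendsto_SS_pow :
    Tendsto (fun M : ℕ => SS (2^(M+1) - 1)) atTop (nhds Real.eulerMascheroniConstant) := by
  rw [← tendsto_sub_nhds_zero_iff]
  apply squeeze_zero_norm (a := fun M : ℕ => (2*(M:ℝ)+2) * (1/2:ℝ)^M)
  · intro M
    rw [SS_pow M]
    set γ := Real.eulerMascheroniConstant
    have h12 : ((1:ℝ)/2)^(M+1) = 1/(2:ℝ)^(M+1) := by rw [div_pow]; norm_num
    have key : ((M:ℝ)+1) * Hh (2^M) - (M:ℝ) * Hh (2^(M+1)) - ((M:ℝ)+2)/2^(M+1) - γ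
        = ((M:ℝ)+1)*(Hh (2^M) - M*Real.log 2 - γ)
          - (M:ℝ)*(Hh (2^(M+1)) - ((M:ℝ)+1)*Real.log 2 - γ)
          - ((M:ℝ)+2)*(1/2:ℝ)^(M+1) := by
      rw [h12]; push_cast; ring
    rw [Real.norm_eq_abs, key]
    have e0 := Hh_pow_bound M
    have e1 := Hh_pow_bound (M+1)
    have hM0 : (0:ℝ) ≤ (M:ℝ) := Nat.cast_nonneg M
    have hp : (0:ℝ) ≤ (1/2:ℝ)^M := by positivity
    have t1 : |((M:ℝ)+1)*(Hh (2^M) - M*Real.log 2 - γ)| ≤ ((M:ℝ)+1) * (1/2:ℝ)^M := by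
      rw [abs_mul, abs_of_nonneg (by linarith)]
      exact mul_le_mul_of_nonneg_left e0 (by linarith)
    have t2 : |(M:ℝ)*(Hh (2^(M+1)) - ((M:ℝ)+1)*Real.log 2 - γ)| ≤ (M:ℝ) * (1/2:ℝ)^(M+1) := by
      rw [abs_mul, abs_of_nonneg hM0]
      have e1' : |Hh (2^(M+1)) - ((M:ℝ)+1) * Real.log 2 - γ| ≤ (1/2:ℝ)^(M+1) := by
        have : ((M+1:ℕ):ℝ) = (M:ℝ)+1 := by push_cast; ring
        rw [← this]; exact e1
      exact mul_le_mul_of_nonneg_left e1' hM0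
    have t3 : |((M:ℝ)+2)*(1/2:ℝ)^(M+1)| = ((M:ℝ)+2)*(1/2:ℝ)^(M+1) := by
      rw [abs_of_nonneg (by positivity)]
    have habs : |((M:ℝ)+1)*(Hh (2^M) - M*Real.log 2 - γ)
          - (M:ℝ)*(Hh (2^(M+1)) - ((M:ℝ)+1)*Real.log 2 - γ)
          - ((M:ℝ)+2)*(1/2:ℝ)^(M+1)|
        ≤ |((M:ℝ)+1)*(Hh (2^M) - M*Real.log 2 - γ)|
          + |(M:ℝ)*(Hh (2^(M+1)) - ((M:ℝ)+1)*Real.log 2 - γ)|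
          + |((M:ℝ)+2)*(1/2:ℝ)^(M+1)| := by
      calc |_ - _ - _| ≤ |_ - _| + |((M:ℝ)+2)*(1/2:ℝ)^(M+1)| := abs_sub _ _
        _ ≤ _ + _ + _ := by gcongr; exact abs_sub _ _
    have hps : (1/2:ℝ)^(M+1) = (1/2:ℝ) * (1/2:ℝ)^M := by rw [pow_succ]; ring
    rw [hps] at t2 t3
    calc |_| ≤ _ := habs
      _ ≤ (2*(M:ℝ)+2) * (1/2:ℝ)^M := by rw [hps] at *; nlinarith [t1, t2, t3]
  · have h1 : Tendsto (fun n : ℕ => (n:ℝ) * (1/2:ℝ)^n) atTop (nhds 0) :=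
      tendsto_self_mul_const_pow_of_lt_one (by norm_num) (by norm_num)
    have h2 : Tendsto (fun n : ℕ => (1/2:ℝ)^n) atTop (nhds 0) :=
      tendsto_pow_atTop_nhds_zero_of_lt_one (by norm_num) (by norm_num)
    have := (h1.const_mul 2).add (h2.const_mul 2)
    simp only [mul_zero, add_zero] at this
    convert this using 2 with M
    ring

lemma tail_bound_aux {a : ℕ} (ha : 2 ≤ a) (hae : Even a) :
    ∀ N, a ≤ N →
      ((Even N → 1/(N:ℝ) ≤ ∑ n ∈ Finset.Icc a N, (-1:ℝ)^n / n ∧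
          ∑ n ∈ Finset.Icc a N, (-1:ℝ)^n / n ≤ 1/(a:ℝ)) ∧
       (¬ Even N → 0 ≤ ∑ n ∈ Finset.Icc a N, (-1:ℝ)^n / n ∧
          ∑ n ∈ Finset.Icc a N, (-1:ℝ)^n / n ≤ 1/(a:ℝ) - 1/(N:ℝ))) := by
  intro N hN
  induction N, hN using Nat.le_induction with
  | base =>
    rw [Finset.Icc_self, Finset.sum_singleton, hae.neg_one_pow]
    refine ⟨fun _ => ⟨le_of_eq (by norm_num), le_of_eq (by norm_num)⟩, fun h => absurd hae h⟩
  | succ N hNge ih =>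
    have haN : (0:ℝ) < a := by positivity
    have hN0 : (0:ℝ) < N := by
      have : 0 < N := by omega
      exact_mod_cast this
    have hN1 : (0:ℝ) < (N:ℝ)+1 := by positivity
    have hsum : ∑ n ∈ Finset.Icc a (N+1), (-1:ℝ)^n / n
        = (∑ n ∈ Finset.Icc a N, (-1:ℝ)^n / n) + (-1:ℝ)^(N+1)/((N:ℝ)+1) := by
      rw [Finset.sum_Icc_succ_top (by omega)]
      norm_num
    constructor
    · intro hev
      have hodd : ¬ Even N := by
        rcases Nat.even_or_odd N with h | h
        · exact absurd (h.add_one) (by simpa using hev)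
        · simpa using h
      obtain ⟨h1, h2⟩ := ih.2 hodd
      have hsign : (-1:ℝ)^(N+1) = 1 := hev.neg_one_pow
      rw [hsum, hsign]
      constructor
      · push_cast; nlinarith
      · push_cast
        have : 1/((N:ℝ)+1) ≤ 1/(N:ℝ) := by
          apply one_div_le_one_div_of_le hN0; linarith
        linarith
    · intro hodd
      have hev : Even N := by
        rcases Nat.even_or_odd N with h | h
        · exact h
        · exact absurd (h.add_one) hodd
      obtain ⟨h1, h2⟩ := ih.1 hev
      have hsign : (-1:ℝ)^(N+1) = -1 := (hev.add_one).neg_one_pow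
      rw [hsum, hsign, neg_div]
      constructor
      · push_cast
        have : 1/((N:ℝ)+1) ≤ 1/(N:ℝ) := by
          apply one_div_le_one_div_of_le hN0; linarith
        linarith
      · push_cast; linarith

lemma tail_bound {a : ℕ} (ha : 2 ≤ a) (hae : Even a) {N : ℕ} (hN : a ≤ N) :
    0 ≤ ∑ n ∈ Finset.Icc a N, (-1:ℝ)^n / n ∧
      ∑ n ∈ Finset.Icc a N, (-1:ℝ)^n / n ≤ 1/(a:ℝ) := by
  have h := tail_bound_aux ha hae N hN
  have hN0 : (0:ℝ) < N := by
    have : 0 < N := by omega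
    exact_mod_cast this
  rcases Nat.even_or_odd N with hev | hodd
  · obtain ⟨h1, h2⟩ := h.1 hev
    exact ⟨le_trans (by positivity) h1, h2⟩
  · obtain ⟨h1, h2⟩ := h.2 (by simpa using hodd)
    refine ⟨h1, le_trans h2 ?_⟩
    have : (0:ℝ) ≤ 1/(N:ℝ) := by positivity
    linarith

/-- Vacca's series: `γ = ∑_{n=1}^∞ (-1)^n ⌊log₂ n⌋ / n`. -/
theorem gamma_eq_vacca_series :
    Tendsto (fun N : ℕ => ∑ n ∈ Finset.Icc 1 N,
        (-1 : ℝ) ^ n * (⌊Real.log n / Real.log 2⌋ : ℝ) / n)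
      atTop (nhds Real.eulerMascheroniConstant) := by
  have hfl : ∀ n : ℕ, (⌊Real.log n / Real.log 2⌋ : ℝ) = (Nat.log 2 n : ℝ) := by
    intro n
    rw [Real.log_div_log, show ((2:ℝ)) = ((2:ℕ):ℝ) by norm_num,
      Real.floor_logb_natCast (Nat.cast_nonneg n), Int.log_natCast]
    norm_num
  have hSS : ∀ N : ℕ, (∑ n ∈ Finset.Icc 1 N,
      (-1 : ℝ) ^ n * (⌊Real.log n / Real.log 2⌋ : ℝ) / n) = SS N := by
    intro N
    rw [SS]
    exact Finset.sum_congr rfl (fun n _ => by rw [hfl n])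
  simp only [hSS]
  -- main argument
  rw [Metric.tendsto_atTop]
  intro ε hε
  have hsub := Metric.tendsto_atTop.mp tendsto_SS_pow (ε/2) (by linarith)
  obtain ⟨M₀, hM₀⟩ := hsub
  have hmul : Tendsto (fun n : ℕ => (n:ℝ) * (1/2:ℝ)^n) atTop (nhds 0) :=
    tendsto_self_mul_const_pow_of_lt_one (by norm_num) (by norm_num)
  obtain ⟨M₁, hM₁⟩ := Metric.tendsto_atTop.mp hmul (ε/2) (by linarith)
  set K := max M₀ M₁ + 1 with hK
  refine ⟨2^K, fun N hNK => ?_⟩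
  have hN1 : 1 ≤ N := le_trans Nat.one_le_two_pow hNK
  set M := Nat.log 2 N with hM
  have hMK : K ≤ M := by
    have := Nat.log_mono_right (b := 2) hNK
    rwa [Nat.log_pow (by norm_num)] at this
  have hM1 : 1 ≤ M := by omega
  have hle : 2^M ≤ N := Nat.pow_log_le_self 2 (by omega)
  have hlt : N < 2^(M+1) := Nat.lt_pow_succ_log_self (by norm_num) N
  obtain ⟨m, hm⟩ : ∃ m, M = m + 1 := ⟨M - 1, by omega⟩
  -- split
  have hsplitK : (2^M - 1 : ℕ) ≤ N := by omega
  have hsplit := sum_Ioc_split (fun n => (-1 : ℝ) ^ n * (Nat.log 2 n : ℝ) / n) hsplitK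
  have hIoc : Finset.Ioc (2^M - 1) N = Finset.Icc (2^M) N := by
    rw [← Finset.Icc_add_one_left_eq_Ioc]
    congr 1
    have : 1 ≤ (2:ℕ)^M := Nat.one_le_two_pow
    omega
  have hblock : ∑ n ∈ Finset.Ioc (2^M - 1) N, (-1 : ℝ) ^ n * (Nat.log 2 n : ℝ) / n
      = (M:ℝ) * ∑ n ∈ Finset.Icc (2^M) N, (-1:ℝ)^n / n := by
    rw [hIoc, Finset.mul_sum]
    refine Finset.sum_congr rfl (fun n hn => ?_)
    simp only [Finset.mem_Icc] at hn
    rw [Nat.log_eq_of_pow_le_of_lt_pow hn.1 (lt_of_le_of_lt hn.2 hlt)]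
    ring
  have hSSN : SS N = SS (2^M - 1) + (M:ℝ) * ∑ n ∈ Finset.Icc (2^M) N, (-1:ℝ)^n / n := by
    rw [SS, hsplit, ← SS, hblock]
  -- bound the tail
  have h2M : 2 ≤ (2:ℕ)^M := by
    calc (2:ℕ) = 2^1 := rfl
    _ ≤ 2^M := Nat.pow_le_pow_right (by norm_num) hM1
  have hevpow : Even ((2:ℕ)^M) := by
    rw [hm, pow_succ]
    exact even_two.mul_left _
  obtain ⟨ht0, ht1⟩ := tail_bound h2M hevpow hle
  have htail : |(M:ℝ) * ∑ n ∈ Finset.Icc (2^M) N, (-1:ℝ)^n / n| ≤ (M:ℝ) * (1/2:ℝ)^M := by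
    rw [abs_mul, abs_of_nonneg (Nat.cast_nonneg M), abs_of_nonneg ht0]
    apply mul_le_mul_of_nonneg_left _ (Nat.cast_nonneg M)
    calc ∑ n ∈ Finset.Icc (2^M) N, (-1:ℝ)^n / n ≤ 1/((2^M:ℕ):ℝ) := ht1
    _ = (1/2:ℝ)^M := by push_cast; rw [div_pow]; norm_num
  -- combine
  have hdist : dist (SS N) Real.eulerMascheroniConstant
      ≤ dist (SS (2^M - 1)) Real.eulerMascheroniConstant
        + (M:ℝ) * (1/2:ℝ)^M := by
    rw [Real.dist_eq, Real.dist_eq, hSSN]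
    calc |SS (2^M - 1) + (M:ℝ) * ∑ n ∈ Finset.Icc (2^M) N, (-1:ℝ)^n / n
          - Real.eulerMascheroniConstant|
        ≤ |SS (2^M - 1) - Real.eulerMascheroniConstant|
          + |(M:ℝ) * ∑ n ∈ Finset.Icc (2^M) N, (-1:ℝ)^n / n| := by
          rw [add_sub_right_comm]; exact abs_add_le _ _
      _ ≤ _ := by linarith
  have hb1 : dist (SS (2^M - 1)) Real.eulerMascheroniConstant < ε/2 := by
    have := hM₀ m (by omega)
    rwa [← hm] at this
  have hb2 : (M:ℝ) * (1/2:ℝ)^M < ε/2 := by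
    have := hM₁ M (by omega)
    rwa [Real.dist_eq, sub_zero, abs_of_nonneg (by positivity)] at this
  calc dist (SS N) Real.eulerMascheroniConstant ≤ _ := hdist
    _ < ε/2 + ε/2 := by linarith
    _ = ε := by ring
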